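/- arXiv:math/0507222 — 4 statements merged into one kernel-verified Lean document; each statement's English description precedes it below -/
import Mathlib

section
/- Let A be an absolutely C̃-convex and C̃-absorbent subset of a C̃-module G. Then val_A(u) := sup{b ∈ ℝ : u ∈ [(ε^b)_ε] A} defines a valuation on G: val_A(0) = +∞, val_A(λu) ≥ val_{C̃}(λ) + val_A(u) for all λ ∈ C̃, and val_A(u+v) ≥ min(val_A(u), val_A(v)). -/
noncomputable section

open scoped Pointwise

set_option synthInstance.maxHeartbeats 1000000

/-- `|u ε| = O(ε^b)` as `ε → 0⁺` (nets indexed by `ε ∈ (0,1]`). -/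
def IsO (u : ℝ → ℂ) (b : ℝ) : Prop :=
  ∃ C > 0, ∃ ε₀ > 0, ∀ ε : ℝ, 0 < ε → ε ≤ ε₀ → ‖u ε‖ ≤ C * ε ^ b

def Moderate (u : ℝ → ℂ) : Prop := ∃ N : ℕ, IsO u (-(N : ℝ))

def Negligible (u : ℝ → ℂ) : Prop := ∀ q : ℕ, IsO u (q : ℝ)

lemma isO_mono {u : ℝ → ℂ} {b b' : ℝ} (h : IsO u b) (hb : b' ≤ b) : IsO u b' := by
  obtain ⟨C, hC, e, he, H⟩ := h
  refine ⟨C, hC, min e 1, lt_min he one_pos, fun ε hε hε' => ?_⟩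
  have h1 : ε ≤ e := le_trans hε' (min_le_left _ _)
  have h2 : ε ≤ 1 := le_trans hε' (min_le_right _ _)
  refine le_trans (H ε hε h1) (mul_le_mul_of_nonneg_left ?_ (le_of_lt hC))
  exact Real.rpow_le_rpow_of_exponent_ge hε h2 hb

/-- The subring `E_M ⊆ ℂ^{(0,1]}` of moderate nets. -/
def moderateSubring : Subring (ℝ → ℂ) where
  carrier := {u | Moderate u}
  zero_mem' := ⟨0, 1, one_pos, 1, one_pos, fun ε hε _ => by
    simp [Real.rpow_natCast]⟩
  one_mem' := ⟨0, 1, one_pos, 1, one_pos, fun ε hε _ => by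
    simp [Real.rpow_zero]⟩
  neg_mem' := by
    rintro u ⟨N, C, hC, e, he, H⟩
    exact ⟨N, C, hC, e, he, fun ε hε hε' => by simpa using H ε hε hε'⟩
  add_mem' := by
    rintro u v ⟨N, hN⟩ ⟨M, hM⟩
    have hl1 : (N : ℝ) ≤ ((max N M : ℕ) : ℝ) := by exact_mod_cast Nat.le_max_left N M
    have hl2 : (M : ℝ) ≤ ((max N M : ℕ) : ℝ) := by exact_mod_cast Nat.le_max_right N M
    obtain ⟨C1, hC1, e1, he1, H1⟩ := isO_mono hN (neg_le_neg hl1)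
    obtain ⟨C2, hC2, e2, he2, H2⟩ := isO_mono hM (neg_le_neg hl2)
    refine ⟨max N M, C1 + C2, by positivity, min e1 e2, lt_min he1 he2, fun ε hε hε' => ?_⟩
    calc ‖u ε + v ε‖ ≤ ‖u ε‖ + ‖v ε‖ :=
          norm_add_le _ _
      _ ≤ C1 * ε ^ (-((max N M : ℕ) : ℝ)) + C2 * ε ^ (-((max N M : ℕ) : ℝ)) :=
          add_le_add (H1 ε hε (le_trans hε' (min_le_left _ _)))
            (H2 ε hε (le_trans hε' (min_le_right _ _)))
      _ = (C1 + C2) * ε ^ (-((max N M : ℕ) : ℝ)) := by ring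
  mul_mem' := by
    rintro u v ⟨N, C1, hC1, e1, he1, H1⟩ ⟨M, C2, hC2, e2, he2, H2⟩
    refine ⟨N + M, C1 * C2, by positivity, min e1 e2, lt_min he1 he2, fun ε hε hε' => ?_⟩
    have h1 := H1 ε hε (le_trans hε' (min_le_left _ _))
    have h2 := H2 ε hε (le_trans hε' (min_le_right _ _))
    have hrw : ε ^ (-(((N + M : ℕ)) : ℝ)) = ε ^ (-(N : ℝ)) * ε ^ (-(M : ℝ)) := by
      rw [← Real.rpow_add hε]; push_cast; ring_nf
    calc ‖u ε * v ε‖ = ‖u ε‖ * ‖v ε‖ := norm_mul _ _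
      _ ≤ (C1 * ε ^ (-(N : ℝ))) * (C2 * ε ^ (-(M : ℝ))) :=
          mul_le_mul h1 h2 (norm_nonneg _) (by positivity)
      _ = C1 * C2 * ε ^ (-(((N + M : ℕ)) : ℝ)) := by rw [hrw]; ring

/-- The ideal `N ⊆ E_M` of negligible nets. -/
def negligibleIdeal : Ideal moderateSubring where
  carrier := {u | Negligible u.val}
  zero_mem' := fun q => ⟨1, one_pos, 1, one_pos, fun ε hε _ => by
    simpa using by positivity⟩
  add_mem' := by
    rintro u v hu hv q
    obtain ⟨C1, hC1, e1, he1, H1⟩ := hu q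
    obtain ⟨C2, hC2, e2, he2, H2⟩ := hv q
    refine ⟨C1 + C2, by positivity, min e1 e2, lt_min he1 he2, fun ε hε hε' => ?_⟩
    calc ‖u.val ε + v.val ε‖
        ≤ ‖u.val ε‖ + ‖v.val ε‖ := norm_add_le _ _
      _ ≤ C1 * ε ^ (q : ℝ) + C2 * ε ^ (q : ℝ) :=
          add_le_add (H1 ε hε (le_trans hε' (min_le_left _ _)))
            (H2 ε hε (le_trans hε' (min_le_right _ _)))
      _ = (C1 + C2) * ε ^ (q : ℝ) := by ring
  smul_mem' := by
    rintro c u hu q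
    obtain ⟨N, C1, hC1, e1, he1, H1⟩ := c.2
    obtain ⟨C2, hC2, e2, he2, H2⟩ := hu (q + N)
    refine ⟨C1 * C2, by positivity, min e1 e2, lt_min he1 he2, fun ε hε hε' => ?_⟩
    have h1 := H1 ε hε (le_trans hε' (min_le_left _ _))
    have h2 := H2 ε hε (le_trans hε' (min_le_right _ _))
    have hrw : ε ^ (-(N : ℝ)) * ε ^ (((q + N : ℕ)) : ℝ) = ε ^ (q : ℝ) := by
      rw [← Real.rpow_add hε]; push_cast; ring_nf
    calc ‖(c • u).val ε‖
        = ‖c.val ε‖ * ‖u.val ε‖ := norm_mul _ _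
      _ ≤ (C1 * ε ^ (-(N : ℝ))) * (C2 * ε ^ (((q + N : ℕ)) : ℝ)) :=
          mul_le_mul h1 h2 (norm_nonneg _) (by positivity)
      _ = C1 * C2 * (ε ^ (-(N : ℝ)) * ε ^ (((q + N : ℕ)) : ℝ)) := by ring
      _ = C1 * C2 * ε ^ (q : ℝ) := by rw [hrw]

/-- The ring `C̃ = E_M / N` of Colombeau generalized complex numbers. -/
abbrev Ctilde : Type := ↥moderateSubring ⧸ negligibleIdeal

/-- The valuation on `C̃`, computed on a representative. -/
def valC (x : Ctilde) : EReal :=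
  sSup ((fun b : ℝ => (b : EReal)) '' {b | IsO (Quotient.out x).val b})

/-- The ultra-pseudo-norm `|λ|ₑ = e^{-val(λ)}` on `C̃` (with `e^{-∞} := 0`). -/
def normEC (x : Ctilde) : ℝ :=
  if valC x = ⊤ then 0 else Real.exp (-(valC x).toReal)

lemma epsPow_moderate (b : ℝ) : Moderate (fun ε => ((ε ^ b : ℝ) : ℂ)) := by
  refine ⟨⌈-b⌉₊, 1, one_pos, 1, one_pos, fun ε hε hε' => ?_⟩
  have hb : -((⌈-b⌉₊ : ℝ)) ≤ b := by
    have := Nat.le_ceil (-b); linarith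
  have : ‖((ε ^ b : ℝ) : ℂ)‖ = ε ^ b := by
    rw [Complex.norm_real, Real.norm_eq_abs, abs_of_nonneg (Real.rpow_nonneg (le_of_lt hε) b)]
  rw [this, one_mul]
  exact Real.rpow_le_rpow_of_exponent_ge hε hε' hb

/-- The generalized number `[(ε^b)_ε] ∈ C̃`. -/
def epsPow (b : ℝ) : Ctilde :=
  Ideal.Quotient.mk negligibleIdeal ⟨fun ε => ((ε ^ b : ℝ) : ℂ), epsPow_moderate b⟩

section Module

variable {G : Type*} [AddCommGroup G] [Module Ctilde G]

/-- `A` is `C̃`-absorbent. -/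
def CAbsorbent (A : Set G) : Prop :=
  ∀ u : G, ∃ a : ℝ, ∀ b : ℝ, b ≤ a → u ∈ epsPow b • A

/-- `A` is `C̃`-balanced. -/
def CBalanced (A : Set G) : Prop :=
  ∀ lam : Ctilde, normEC lam ≤ 1 → lam • A ⊆ A

/-- `A` is `C̃`-convex. -/
def CConvex (A : Set G) : Prop :=
  A + A ⊆ A ∧ ∀ b : ℝ, 0 ≤ b → epsPow b • A ⊆ A

/-- The Minkowski valuation `val_A(u) = sup {b : u ∈ [(ε^b)_ε] A}`. -/
def valA (A : Set G) (u : G) : EReal :=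
  sSup ((fun b : ℝ => (b : EReal)) '' {b | u ∈ epsPow b • A})

/-- The gauge `P_A(u) = e^{-val_A(u)}`. -/
def gaugeA (A : Set G) (u : G) : ℝ :=
  if valA A u = ⊤ then 0 else Real.exp (-(valA A u).toReal)

end Module

-- helper lemmas

lemma isO_add {u v : ℝ → ℂ} {b : ℝ} (hu : IsO u b) (hv : IsO v b) : IsO (u + v) b := by
  obtain ⟨C1, hC1, e1, he1, H1⟩ := hu
  obtain ⟨C2, hC2, e2, he2, H2⟩ := hv
  refine ⟨C1 + C2, by positivity, min e1 e2, lt_min he1 he2, fun ε hε hε' => ?_⟩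
  calc ‖u ε + v ε‖ ≤ ‖u ε‖ + ‖v ε‖ := norm_add_le _ _
    _ ≤ C1 * ε ^ b + C2 * ε ^ b :=
        add_le_add (H1 ε hε (le_trans hε' (min_le_left _ _)))
          (H2 ε hε (le_trans hε' (min_le_right _ _)))
    _ = (C1 + C2) * ε ^ b := by ring

lemma epsPow_mul (b c : ℝ) : epsPow b * epsPow c = epsPow (b + c) := by
  unfold epsPow
  rw [← map_mul, Ideal.Quotient.eq]
  intro q
  refine ⟨1, one_pos, 1, one_pos, fun ε hε hε' => ?_⟩
  have : (ε ^ b : ℝ) * ε ^ c = ε ^ (b + c) := (Real.rpow_add hε b c).symm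
  show ‖((ε ^ b : ℝ) : ℂ) * ((ε ^ c : ℝ) : ℂ) - ((ε ^ (b + c) : ℝ) : ℂ)‖ ≤ _
  rw [← Complex.ofReal_mul, this, sub_self]
  simp
  positivity

lemma epsPow_zero : epsPow 0 = 1 := by
  unfold epsPow
  have : (⟨fun ε => ((ε ^ (0:ℝ) : ℝ) : ℂ), epsPow_moderate 0⟩ : moderateSubring) = 1 := by
    ext ε; simp [Real.rpow_zero]
  rw [this, map_one]

lemma ereal_le_of_forall_real_lt {a b : EReal} (h : ∀ r : ℝ, (r : EReal) < a → (r : EReal) ≤ b) :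
    a ≤ b := by
  by_contra hc
  push_neg at hc
  obtain ⟨r, h1, h2⟩ := EReal.exists_between_coe_real hc
  exact absurd (h r h2) (not_le.2 h1)

section ModuleHelpers

variable {G : Type*} [AddCommGroup G] [Module Ctilde G]

lemma mem_smul_mono {A : Set G} (hconv : CConvex A) {u : G} {b b' : ℝ}
    (hb : u ∈ epsPow b • A) (hle : b' ≤ b) : u ∈ epsPow b' • A := by
  rw [Set.mem_smul_set] at hb ⊢
  obtain ⟨x, hx, hxu⟩ := hb
  have hx' : epsPow (b - b') • x ∈ A :=
    hconv.2 (b - b') (by linarith) (Set.smul_mem_smul_set hx)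
  refine ⟨epsPow (b - b') • x, hx', ?_⟩
  rw [smul_smul, epsPow_mul, show b' + (b - b') = b by ring, hxu]

lemma zero_mem_of_absorbent {A : Set G} (habs : CAbsorbent A) : (0 : G) ∈ A := by
  obtain ⟨a, ha⟩ := habs 0
  have := ha a le_rfl
  rw [Set.mem_smul_set] at this
  obtain ⟨x, hx, hx0⟩ := this
  have : x = 0 := by
    have h1 : epsPow (-a) • (epsPow a • x) = epsPow (-a) • ((0:G)) := by rw [hx0]
    rw [smul_zero, smul_smul, epsPow_mul] at h1
    have h2 : (-a) + a = 0 := by ring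
    rw [h2, epsPow_zero, one_smul] at h1
    exact h1
  rw [← this]; exact hx

lemma smul_subset_of_isO {A : Set G} (hbal : CBalanced A) {lam : Ctilde} {b : ℝ}
    (h : IsO (Quotient.out lam).val b) : (epsPow (-b) * lam) • A ⊆ A := by
  set mu := epsPow (-b) * lam with hmu
  apply hbal
  -- show IsO (Quotient.out mu).val 0
  have hout : ∀ (x : Ctilde), Ideal.Quotient.mk negligibleIdeal (Quotient.out x) = x :=
    fun x => Quotient.out_eq x
  have hkey : IsO (Quotient.out mu).val 0 := by
    set e : moderateSubring := ⟨fun ε => ((ε ^ (-b) : ℝ) : ℂ), epsPow_moderate (-b)⟩ with he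
    have heq : Ideal.Quotient.mk negligibleIdeal (Quotient.out mu) =
        Ideal.Quotient.mk negligibleIdeal (e * Quotient.out lam) := by
      rw [hout, hmu, map_mul, hout]
      rfl
    rw [Ideal.Quotient.eq] at heq
    have hneg : Negligible ((Quotient.out mu - e * Quotient.out lam : moderateSubring)).val := heq
    have h0 : IsO ((Quotient.out mu - e * Quotient.out lam : moderateSubring)).val 0 := by
      have := hneg 0
      simpa using this
    have hprod : IsO ((e * Quotient.out lam : moderateSubring)).val 0 := by
      obtain ⟨C, hC, e0, he0, H⟩ := h
      refine ⟨C, hC, e0, he0, fun ε hε hε' => ?_⟩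
      show ‖((ε ^ (-b) : ℝ) : ℂ) * (Quotient.out lam).val ε‖ ≤ _
      rw [norm_mul, Complex.norm_real, Real.norm_eq_abs, abs_of_nonneg (Real.rpow_nonneg hε.le _)]
      calc ε ^ (-b) * ‖(Quotient.out lam).val ε‖
          ≤ ε ^ (-b) * (C * ε ^ b) := by
            apply mul_le_mul_of_nonneg_left (H ε hε hε') (Real.rpow_nonneg hε.le _)
        _ = C * (ε ^ (-b) * ε ^ b) := by ring
        _ = C * ε ^ (0:ℝ) := by rw [← Real.rpow_add hε]; norm_num
    have := isO_add h0 hprod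
    have heq2 : ((Quotient.out mu - e * Quotient.out lam : moderateSubring)).val +
        ((e * Quotient.out lam : moderateSubring)).val = (Quotient.out mu).val := by
      ext ε; simp
    rwa [heq2] at this
  -- conclude normEC mu ≤ 1
  unfold normEC
  split_ifs with hT
  · norm_num
  · have hge : (0 : EReal) ≤ valC mu := by
      apply le_sSup
      exact ⟨0, hkey, rfl⟩
    have hne : valC mu ≠ ⊥ := fun hb' => by rw [hb'] at hge; exact absurd hge (by simp)
    have : (0:ℝ) ≤ (valC mu).toReal := by
      have hco := EReal.coe_toReal hT hne
      rw [← hco] at hge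
      exact_mod_cast hge
    simp only [Real.exp_le_one_iff]
    linarith

lemma lt_valA_iff {A : Set G} {u : G} {r : ℝ} :
    (r : EReal) < valA A u ↔ ∃ b : ℝ, u ∈ epsPow b • A ∧ (r : EReal) < (b : EReal) := by
  constructor
  · intro h
    obtain ⟨y, hy, hlt⟩ := lt_sSup_iff.1 h
    obtain ⟨b, hb, rfl⟩ := hy
    exact ⟨b, hb, hlt⟩
  · rintro ⟨b, hb, hlt⟩
    exact lt_of_lt_of_le hlt (le_sSup ⟨b, hb, rfl⟩)

lemma mem_le_valA {A : Set G} {u : G} {b : ℝ} (hb : u ∈ epsPow b • A) :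
    (b : EReal) ≤ valA A u := le_sSup ⟨b, hb, rfl⟩

end ModuleHelpers
set_option maxHeartbeats 1000000

/-- the Minkowski functional `val_A` of an absolutely `C̃`-convex
and `C̃`-absorbent subset `A` of a `C̃`-module `G` is a valuation on `G`. -/
theorem valA_is_valuation {G : Type*} [AddCommGroup G] [Module Ctilde G]
    (A : Set G) (hbal : CBalanced A) (hconv : CConvex A) (habs : CAbsorbent A) :
    valA A (0 : G) = ⊤ ∧
    (∀ (lam : Ctilde) (u : G), valC lam + valA A u ≤ valA A (lam • u)) ∧
    (∀ u v : G, min (valA A u) (valA A v) ≤ valA A (u + v)) := by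
  refine ⟨?_, ?_, ?_⟩
  · -- valA A 0 = ⊤
    have h0 : (0 : G) ∈ A := zero_mem_of_absorbent habs
    have hall : ∀ r : ℝ, (r : EReal) ≤ valA A 0 := fun r =>
      mem_le_valA ⟨0, h0, smul_zero _⟩
    by_contra hne
    have hlt : valA A 0 < ⊤ := lt_top_iff_ne_top.2 hne
    obtain ⟨r, h1, _⟩ := EReal.exists_between_coe_real hlt
    exact absurd (hall r) (not_le.2 h1)
  · -- scalar multiplication
    intro lam u
    apply ereal_le_of_forall_real_lt
    intro r hr
    have hS1ne : ∃ b : ℝ, IsO (Quotient.out lam).val b := by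
      obtain ⟨N, hN⟩ := (Quotient.out lam).2
      exact ⟨-(N : ℝ), hN⟩
    have hS2ne : ∃ c : ℝ, u ∈ epsPow c • A := by
      obtain ⟨a, ha⟩ := habs u
      exact ⟨a, ha a le_rfl⟩
    have key : ∃ b c : ℝ, IsO (Quotient.out lam).val b ∧ u ∈ epsPow c • A ∧ r < b + c := by
      by_cases hx : valC lam = ⊤
      · obtain ⟨c, hc⟩ := hS2ne
        have hlt : ((r - c : ℝ) : EReal) < valC lam := hx ▸ EReal.coe_lt_top _
        obtain ⟨y', hy', hlt'⟩ := lt_sSup_iff.1 hlt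
        obtain ⟨b, hb, rfl⟩ := hy'
        have hlt'' : ((r - c : ℝ) : EReal) < ((b : ℝ) : EReal) := hlt'
        have : (r - c : ℝ) < b := by exact_mod_cast hlt''
        exact ⟨b, c, hb, hc, by linarith⟩
      · by_cases hy : valA A u = ⊤
        · obtain ⟨b, hb⟩ := hS1ne
          have hlt : ((r - b : ℝ) : EReal) < valA A u := hy ▸ EReal.coe_lt_top _
          obtain ⟨c, hc, hlt'⟩ := lt_valA_iff.1 hlt
          have : (r - b : ℝ) < c := by exact_mod_cast hlt'
          exact ⟨b, c, hb, hc, by linarith⟩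
        · obtain ⟨b0, hb0⟩ := hS1ne
          obtain ⟨c0, hc0⟩ := hS2ne
          have hxb : valC lam ≠ ⊥ := by
            intro h
            have : ((b0 : ℝ) : EReal) ≤ valC lam := le_sSup ⟨b0, hb0, rfl⟩
            rw [h] at this
            exact absurd this (by simp)
          have hyb : valA A u ≠ ⊥ := by
            intro h
            have : ((c0 : ℝ) : EReal) ≤ valA A u := mem_le_valA hc0
            rw [h] at this
            exact absurd this (by simp)
          set p := (valC lam).toReal with hp
          set q := (valA A u).toReal with hq
          have hpx : ((p : ℝ) : EReal) = valC lam := EReal.coe_toReal hx hxb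
          have hqy : ((q : ℝ) : EReal) = valA A u := EReal.coe_toReal hy hyb
          have hrpq : r < p + q := by
            rw [← hpx, ← hqy, ← EReal.coe_add] at hr
            exact_mod_cast hr
          set δ := (p + q - r) / 2 with hδ
          have hδpos : 0 < δ := by simp only [hδ]; linarith
          have h1 : ((p - δ : ℝ) : EReal) < valC lam := by
            rw [← hpx]; exact_mod_cast (by linarith : p - δ < p)
          have h2 : ((q - δ : ℝ) : EReal) < valA A u := by
            rw [← hqy]; exact_mod_cast (by linarith : q - δ < q)
          obtain ⟨y1, hy1, hlt1⟩ := lt_sSup_iff.1 h1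
          obtain ⟨b, hb, rfl⟩ := hy1
          obtain ⟨c, hc, hlt2⟩ := lt_valA_iff.1 h2
          have hlt1' : ((p - δ : ℝ) : EReal) < ((b : ℝ) : EReal) := hlt1
          have hb' : p - δ < b := by exact_mod_cast hlt1'
          have hc' : q - δ < c := by exact_mod_cast hlt2
          exact ⟨b, c, hb, hc, by simp only [hδ] at hb' hc' ⊢; linarith⟩
    obtain ⟨b, c, hb, hc, hrbc⟩ := key
    rw [Set.mem_smul_set] at hc
    obtain ⟨x, hx, hxu⟩ := hc
    have hmemA : (epsPow (-b) * lam) • x ∈ A :=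
      smul_subset_of_isO hbal hb (Set.smul_mem_smul_set hx)
    have hsm : epsPow (b + c) • ((epsPow (-b) * lam) • x) = lam • u := by
      rw [smul_smul, ← mul_assoc, epsPow_mul, show b + c + -b = c by ring, ← hxu, smul_smul, mul_comm]
    have hmem : lam • u ∈ epsPow (b + c) • A :=
      Set.mem_smul_set.2 ⟨(epsPow (-b) * lam) • x, hmemA, hsm⟩
    calc (r : EReal) ≤ ((b + c : ℝ) : EReal) := by exact_mod_cast hrbc.le
      _ ≤ valA A (lam • u) := mem_le_valA hmem
  · -- addition
    intro u v
    apply ereal_le_of_forall_real_lt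
    intro r hr
    rw [lt_min_iff] at hr
    obtain ⟨b, hb, hrb⟩ := lt_valA_iff.1 hr.1
    obtain ⟨c, hc, hrc⟩ := lt_valA_iff.1 hr.2
    have hrb' : r < b := by exact_mod_cast hrb
    have hrc' : r < c := by exact_mod_cast hrc
    set m := min b c with hm
    have hbm : u ∈ epsPow m • A := mem_smul_mono hconv hb (min_le_left _ _)
    have hcm : v ∈ epsPow m • A := mem_smul_mono hconv hc (min_le_right _ _)
    rw [Set.mem_smul_set] at hbm hcm
    obtain ⟨x, hx, hxu⟩ := hbm
    obtain ⟨y, hy, hyv⟩ := hcm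
    have hxy : x + y ∈ A := hconv.1 (Set.add_mem_add hx hy)
    have hmem : u + v ∈ epsPow m • A :=
      Set.mem_smul_set.2 ⟨x + y, hxy, by rw [smul_add, hxu, hyv]⟩
    have hrm : r < m := lt_min hrb' hrc'
    calc (r : EReal) ≤ ((m : ℝ) : EReal) := by exact_mod_cast hrm.le
      _ ≤ _ := mem_le_valA hmem
end
end

section
/- With A absolutely C̃-convex and absorbent in a C̃-module G and P_A(u) := e^{-val_A(u)}, for every η > 0 the chain of inclusions {u ∈ G : P_A(u) < η} ⊆ [(ε^{-log η})_ε] A ⊆ {u ∈ G : P_A(u) ≤ η} holds. -/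
noncomputable section

open scoped Pointwise

set_option synthInstance.maxHeartbeats 1000000

lemma epsPow_add (b c : ℝ) : epsPow (b + c) = epsPow b * epsPow c := by
  unfold epsPow
  rw [← map_mul, Ideal.Quotient.eq]
  intro q
  refine ⟨1, one_pos, 1, one_pos, fun ε hε _ => ?_⟩
  have : ((ε ^ (b + c) : ℝ) : ℂ) - ((ε ^ b : ℝ) : ℂ) * ((ε ^ c : ℝ) : ℂ) = 0 := by
    rw [← Complex.ofReal_mul, ← Real.rpow_add hε]; ring
  have hv : ((⟨fun ε => ((ε ^ (b + c) : ℝ) : ℂ), epsPow_moderate (b + c)⟩ -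
      ⟨fun ε => ((ε ^ b : ℝ) : ℂ), epsPow_moderate b⟩ *
      ⟨fun ε => ((ε ^ c : ℝ) : ℂ), epsPow_moderate c⟩ : moderateSubring)).val ε = 0 := this
  rw [hv]
  simpa using by positivity

lemma epsPow_smul_subset {G : Type*} [AddCommGroup G] [Module Ctilde G]
    {A : Set G} (hconv : CConvex A) {b b' : ℝ} (h : b' ≤ b) :
    epsPow b • A ⊆ epsPow b' • A := by
  have hb : b = b' + (b - b') := by ring
  rw [hb, epsPow_add, mul_smul]
  exact Set.smul_set_mono (hconv.2 (b - b') (by linarith))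

/-- for an absolutely `C̃`-convex absorbent subset `A` of a
`C̃`-module `G` and `P_A(u) = e^{-val_A(u)}`, for every `η > 0` one has
`{P_A < η} ⊆ [(ε^{-log η})_ε] A ⊆ {P_A ≤ η}`. -/
theorem gaugeA_chain {G : Type*} [AddCommGroup G] [Module Ctilde G]
    (A : Set G) (hbal : CBalanced A) (hconv : CConvex A) (habs : CAbsorbent A)
    (η : ℝ) (hη : 0 < η) :
    {u : G | gaugeA A u < η} ⊆ epsPow (-Real.log η) • A ∧
    epsPow (-Real.log η) • A ⊆ {u : G | gaugeA A u ≤ η} := by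
  set b₀ := -Real.log η with hb₀
  constructor
  · intro u hu
    have hne_bot : valA A u ≠ ⊥ := by
      obtain ⟨a, ha⟩ := habs u
      have : (a : EReal) ≤ valA A u := le_sSup ⟨a, ha a le_rfl, rfl⟩
      exact fun hb => by simp [hb] at this
    have h : (b₀ : EReal) < valA A u := by
      by_cases htop : valA A u = ⊤
      · rw [htop]; exact EReal.coe_lt_top _
      · have hg : gaugeA A u = Real.exp (-(valA A u).toReal) := if_neg htop
        have hlt : Real.exp (-(valA A u).toReal) < Real.exp (Real.log η) := by
          rw [Real.exp_log hη, ← hg]; exact hu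
        have hb : b₀ < (valA A u).toReal := by
          have := Real.exp_lt_exp.mp hlt; rw [hb₀]; linarith
        calc (b₀ : EReal) < ((valA A u).toReal : EReal) := EReal.coe_lt_coe_iff.mpr hb
          _ = valA A u := EReal.coe_toReal htop hne_bot
    obtain ⟨x, hx, hlt⟩ := lt_sSup_iff.mp h
    obtain ⟨b, hb_mem, rfl⟩ := hx
    exact epsPow_smul_subset hconv (le_of_lt (EReal.coe_lt_coe_iff.mp hlt)) hb_mem
  · intro u hu
    have hle : (b₀ : EReal) ≤ valA A u := le_sSup ⟨b₀, hu, rfl⟩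
    show gaugeA A u ≤ η
    unfold gaugeA
    split
    · exact le_of_lt hη
    · next htop =>
      have hne_bot : valA A u ≠ ⊥ := by
        intro hb; rw [hb] at hle; simp at hle
      have hb : b₀ ≤ (valA A u).toReal := by
        have : (b₀ : EReal) ≤ ((valA A u).toReal : EReal) := by
          rwa [EReal.coe_toReal htop hne_bot]
        exact_mod_cast this
      calc Real.exp (-(valA A u).toReal) ≤ Real.exp (-b₀) := by
            apply Real.exp_le_exp.mpr; linarith
        _ = η := by rw [hb₀, neg_neg, Real.exp_log hη]
end
end

section
/- Let a_ε(x,ξ) and b_ε(x,ξ) be nets of symbols such that a_ε satisfies the slow scale micro-ellipticity estimate |a_ε(x,ξ)| ≥ s_ε^{-1}⟨ξ⟩^m for (x,ξ) ∈ U×Γ, |ξ| ≥ r_ε, with (r_ε)_ε,(s_ε)_ε ∈ Π_sc, and b_ε satisfies a slow scale bound |b_ε(x,ξ)| ≤ c ω_ε ⟨ξ⟩^{m'} on U×Γ with m' < m and (ω_ε)_ε ∈ Π_sc. Then a_ε + b_ε is slow scale micro-elliptic at the same point: there exist (r'_ε)_ε, (s'_ε)_ε ∈ Π_sc with |a_ε(x,ξ)+b_ε(x,ξ)|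 ≥ (s'_ε)^{-1}⟨ξ⟩^m for (x,ξ) ∈ U×Γ, |ξ| ≥ r'_ε. -/
noncomputable section

/-- Strongly positive slow scale nets: `∃ c > 0` with `c ≤ ω ε` on `(0,1]`,
and for every power `p ≥ 0`, `ω ε ^ p ≤ c_p ε⁻¹` on `(0,1]`. -/
def SlowScale (ω : ℝ → ℝ) : Prop :=
  ∃ c > 0, (∀ ε : ℝ, 0 < ε → ε ≤ 1 → c ≤ ω ε) ∧
    ∀ p : ℝ, 0 ≤ p → ∃ cp > 0, ∀ ε : ℝ, 0 < ε → ε ≤ 1 → ω ε ^ p ≤ cp * ε⁻¹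

/-- `⟨ξ⟩ = (1 + |ξ|²)^{1/2}`. -/
def jbracket {n : ℕ} (ξ : EuclideanSpace ℝ (Fin n)) : ℝ := Real.sqrt (1 + ‖ξ‖ ^ 2)

lemma SlowScale.const (K : ℝ) (hK : 0 < K) : SlowScale (fun _ => K) := by
  refine ⟨K, hK, fun ε _ _ => le_rfl, fun p hp => ⟨K ^ p, Real.rpow_pos_of_pos hK p, ?_⟩⟩
  intro ε hε hε1
  nlinarith [Real.rpow_pos_of_pos hK p, (one_le_inv_iff₀).2 ⟨hε, hε1⟩]

lemma SlowScale.mul {ω₁ ω₂ : ℝ → ℝ} (h₁ : SlowScale ω₁) (h₂ : SlowScale ω₂) :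
    SlowScale (fun ε => ω₁ ε * ω₂ ε) := by
  obtain ⟨c₁, hc₁, hl₁, hu₁⟩ := h₁
  obtain ⟨c₂, hc₂, hl₂, hu₂⟩ := h₂
  refine ⟨c₁ * c₂, mul_pos hc₁ hc₂, fun ε hε hε1 =>
    mul_le_mul (hl₁ ε hε hε1) (hl₂ ε hε hε1) hc₂.le
      ((hc₁.trans_le (hl₁ ε hε hε1)).le), fun p hp => ?_⟩
  obtain ⟨d₁, hd₁, hb₁⟩ := hu₁ (2 * p) (by linarith)
  obtain ⟨d₂, hd₂, hb₂⟩ := hu₂ (2 * p) (by linarith)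
  refine ⟨(d₁ + d₂) / 2, by linarith, fun ε hε hε1 => ?_⟩
  have p₁ : (0:ℝ) < ω₁ ε := hc₁.trans_le (hl₁ ε hε hε1)
  have p₂ : (0:ℝ) < ω₂ ε := hc₂.trans_le (hl₂ ε hε hε1)
  have e : (ω₁ ε * ω₂ ε) ^ p = ω₁ ε ^ p * ω₂ ε ^ p :=
    Real.mul_rpow p₁.le p₂.le
  have sq₁ : (ω₁ ε ^ p) ^ 2 = ω₁ ε ^ (2 * p) := by
    rw [← Real.rpow_natCast (ω₁ ε ^ p) 2, ← Real.rpow_mul p₁.le]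
    norm_num [mul_comm]
  have sq₂ : (ω₂ ε ^ p) ^ 2 = ω₂ ε ^ (2 * p) := by
    rw [← Real.rpow_natCast (ω₂ ε ^ p) 2, ← Real.rpow_mul p₂.le]
    norm_num [mul_comm]
  have amgm := two_mul_le_add_sq (ω₁ ε ^ p) (ω₂ ε ^ p)
  have b1 := hb₁ ε hε hε1
  have b2 := hb₂ ε hε hε1
  rw [e]
  nlinarith [sq₁, sq₂]

lemma SlowScale.max' {ω₁ ω₂ : ℝ → ℝ} (h₁ : SlowScale ω₁) (h₂ : SlowScale ω₂) :
    SlowScale (fun ε => max (ω₁ ε) (ω₂ ε)) := by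
  obtain ⟨c₁, hc₁, hl₁, hu₁⟩ := h₁
  obtain ⟨c₂, hc₂, hl₂, hu₂⟩ := h₂
  refine ⟨c₁, hc₁, fun ε hε hε1 => (hl₁ ε hε hε1).trans (le_max_left _ _), fun p hp => ?_⟩
  obtain ⟨d₁, hd₁, hb₁⟩ := hu₁ p hp
  obtain ⟨d₂, hd₂, hb₂⟩ := hu₂ p hp
  refine ⟨max d₁ d₂, lt_max_of_lt_left hd₁, fun ε hε hε1 => ?_⟩
  have hi : (0:ℝ) < ε⁻¹ := by positivity
  show (max (ω₁ ε) (ω₂ ε)) ^ p ≤ _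
  rcases le_total (ω₁ ε) (ω₂ ε) with h | h
  · rw [max_eq_right h]
    exact (hb₂ ε hε hε1).trans (by nlinarith [le_max_right d₁ d₂])
  · rw [max_eq_left h]
    exact (hb₁ ε hε hε1).trans (by nlinarith [le_max_left d₁ d₂])

lemma SlowScale.rpow' {ω : ℝ → ℝ} (h : SlowScale ω) (α : ℝ) (hα : 0 ≤ α) :
    SlowScale (fun ε => ω ε ^ α) := by
  obtain ⟨c, hc, hl, hu⟩ := h
  refine ⟨min c 1 ^ α, Real.rpow_pos_of_pos (lt_min hc one_pos) α, fun ε hε hε1 =>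
    Real.rpow_le_rpow (lt_min hc one_pos).le ((min_le_left c 1).trans (hl ε hε hε1)) hα,
    fun p hp => ?_⟩
  obtain ⟨d, hd, hbd⟩ := hu (α * p) (mul_nonneg hα hp)
  refine ⟨d, hd, fun ε hε hε1 => ?_⟩
  have hpos : (0:ℝ) < ω ε := hc.trans_le (hl ε hε hε1)
  rw [← Real.rpow_mul hpos.le]
  exact hbd ε hε hε1

/-- slow scale micro-ellipticity is stable under perturbations
by lower order terms with slow scale bounds. -/
theorem slowScale_microelliptic_stable {n : ℕ}
    (U : Set (EuclideanSpace ℝ (Fin n))) (Γ : Set (EuclideanSpace ℝ (Fin n)))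
    (a b : ℝ → EuclideanSpace ℝ (Fin n) → EuclideanSpace ℝ (Fin n) → ℂ)
    (m m' : ℝ) (hm : m' < m)
    (r s ω : ℝ → ℝ) (hr : SlowScale r) (hs : SlowScale s) (hω : SlowScale ω)
    (hell : ∀ ε : ℝ, 0 < ε → ε ≤ 1 → ∀ x ∈ U, ∀ ξ ∈ Γ, r ε ≤ ‖ξ‖ →
      (s ε)⁻¹ * jbracket ξ ^ m ≤ ‖a ε x ξ‖)
    (hb : ∃ c > 0, ∀ ε : ℝ, 0 < ε → ε ≤ 1 → ∀ x ∈ U, ∀ ξ ∈ Γ,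
      ‖b ε x ξ‖ ≤ c * ω ε * jbracket ξ ^ m') :
    ∃ r' s' : ℝ → ℝ, SlowScale r' ∧ SlowScale s' ∧
      ∀ ε : ℝ, 0 < ε → ε ≤ 1 → ∀ x ∈ U, ∀ ξ ∈ Γ, r' ε ≤ ‖ξ‖ →
        (s' ε)⁻¹ * jbracket ξ ^ m ≤ ‖a ε x ξ + b ε x ξ‖ := by
  obtain ⟨c, hc, hbb⟩ := hb
  set δ : ℝ := (m - m')⁻¹ with hδ
  have hδpos : 0 < δ := by
    rw [hδ]; exact inv_pos.2 (by linarith)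
  -- the slow scale net 2*c*ω*s
  have hB : SlowScale (fun ε => 2 * c * ω ε * s ε) :=
    SlowScale.mul (SlowScale.mul (SlowScale.const (2 * c) (by linarith)) hω) hs
  refine ⟨fun ε => max (r ε) ((2 * c * ω ε * s ε) ^ δ), fun ε => 2 * s ε,
    SlowScale.max' hr (hB.rpow' δ hδpos.le),
    SlowScale.mul (SlowScale.const 2 two_pos) hs, ?_⟩
  intro ε hε hε1 x hx ξ hξ hξn
  have hrε : r ε ≤ ‖ξ‖ := (le_max_left _ _).trans hξn
  have hBξ : (2 * c * ω ε * s ε) ^ δ ≤ ‖ξ‖ := (le_max_right _ _).trans hξn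
  obtain ⟨cs, hcs, hls, _⟩ := hs
  obtain ⟨cω, hcω, hlω, _⟩ := hω
  have hspos : 0 < s ε := hcs.trans_le (hls ε hε hε1)
  have hωpos : 0 < ω ε := hcω.trans_le (hlω ε hε hε1)
  have hBpos : 0 < 2 * c * ω ε * s ε := by positivity
  set J : ℝ := jbracket ξ with hJ
  have hJ1 : 1 ≤ J := by
    have h := Real.sqrt_le_sqrt (show (1:ℝ) ≤ 1 + ‖ξ‖ ^ 2 by nlinarith [sq_nonneg ‖ξ‖])
    rw [Real.sqrt_one] at h
    exact h
  have hJpos : 0 < J := lt_of_lt_of_le one_pos hJ1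
  have hJξ : ‖ξ‖ ≤ J := by
    rw [hJ, jbracket]
    rw [show ‖ξ‖ = Real.sqrt (‖ξ‖ ^ 2) from (Real.sqrt_sq (norm_nonneg ξ)).symm]
    exact Real.sqrt_le_sqrt (by nlinarith [Real.sq_sqrt (show (0:ℝ) ≤ ‖ξ‖^2 by positivity)])
  -- key: 2*c*ω ε*s ε ≤ J^(m - m')
  have hkey : 2 * c * ω ε * s ε ≤ J ^ (m - m') := by
    have h1 : ((2 * c * ω ε * s ε) ^ δ) ^ (m - m') ≤ J ^ (m - m') :=
      Real.rpow_le_rpow (by positivity) (hBξ.trans hJξ) (by linarith)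
    have h2 : ((2 * c * ω ε * s ε) ^ δ) ^ (m - m') = 2 * c * ω ε * s ε := by
      rw [← Real.rpow_mul hBpos.le, hδ, inv_mul_cancel₀ (by linarith), Real.rpow_one]
    linarith
  -- hence |b| ≤ (2 s ε)⁻¹ J^m
  have hJsplit : J ^ m = J ^ (m - m') * J ^ m' := by
    rw [← Real.rpow_add hJpos]; ring_nf
  have hJm' : (0:ℝ) < J ^ m' := Real.rpow_pos_of_pos hJpos m'
  have hbsmall : c * ω ε * J ^ m' ≤ (2 * s ε)⁻¹ * J ^ m := by
    rw [hJsplit, inv_mul_eq_div, le_div_iff₀ (by positivity)]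
    calc c * ω ε * J ^ m' * (2 * s ε) = (2 * c * ω ε * s ε) * J ^ m' := by ring
      _ ≤ J ^ (m - m') * J ^ m' := mul_le_mul_of_nonneg_right hkey hJm'.le
  have ha := hell ε hε hε1 x hx ξ hξ hrε
  have hbv := hbb ε hε hε1 x hx ξ hξ
  have htri : ‖a ε x ξ‖ ≤ ‖a ε x ξ + b ε x ξ‖ + ‖b ε x ξ‖ := by
    have := norm_add_le (a ε x ξ + b ε x ξ) (-(b ε x ξ))
    simpa using this
  have hsinv : (s ε)⁻¹ = 2 * (2 * s ε)⁻¹ := by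
    field_simp
  have hJm : (0:ℝ) < J ^ m := Real.rpow_pos_of_pos hJpos m
  have : (2 * s ε)⁻¹ * J ^ m ≤ ‖a ε x ξ + b ε x ξ‖ := by
    nlinarith [ha, hbv, htri, hbsmall, hsinv]
  exact this
end
end

section
/- Consider the symbol net p_ε(x,ξ) = 1 + c_ε x², c_ε ≥ 0, on ℝ×ℝ, and the unique Colombeau solution u = [(1/(1+c_ε x²))_ε] of p·u = 1. Then u ∈ G^∞(ℝ) (i.e. there is N such that for all k, sup_{x∈K}|∂^k u_ε(x)| = O(ε^{-N}) for every compact K) if and only if (c_ε)_ε satisfies the slow scale condition: for every p ≥ 0, c_ε^p = O(ε^{-1}). -/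
noncomputable section

open Complex

lemma ne_zero_aux (s x : ℝ) : (s : ℂ) * x - I ≠ 0 := by
  intro h
  have := congrArg Complex.im h
  simp at this

lemma key (s : ℝ) (k : ℕ) :
    iteratedDeriv k (fun y : ℝ => (1 + s ^ 2 * y ^ 2)⁻¹)
      = fun x : ℝ => ((((-1 : ℂ)) ^ k * (k.factorial : ℂ) * (s : ℂ) ^ k) *
          ((s : ℂ) * x - I) ^ (-(k + 1 : ℤ))).im := by
  induction k with
  | zero =>
    funext x
    simp only [iteratedDeriv_zero, pow_zero, one_mul, Nat.factorial_zero, Nat.cast_one,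
      zpow_neg, zpow_one]
    rw [Complex.inv_im]
    rw [Complex.normSq_apply]
    simp [Complex.sub_im, Complex.sub_re]
    ring_nf
  | succ k ih =>
    funext x
    rw [iteratedDeriv_succ, ih]
    have hz : ((s : ℂ) * x - I) ≠ 0 := ne_zero_aux s x
    -- inner function
    have hinner : HasDerivAt (fun y : ℝ => (s : ℂ) * y - I) (s : ℂ) x := by
      have h1 : HasDerivAt (fun y : ℝ => (y : ℂ)) 1 x := by
        simpa using (hasDerivAt_id x).ofReal_comp
      simpa using ((h1.const_mul ((s : ℂ)))).sub_const I
    have houter : HasDerivAt (fun z : ℂ => z ^ (-(k + 1 : ℤ)))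
        (((-(k + 1 : ℤ) : ℤ) : ℂ) * ((s : ℂ) * x - I) ^ (-(k + 1 : ℤ) - 1)) ((s : ℂ) * x - I) :=
      hasDerivAt_zpow _ _ (Or.inl hz)
    have hcomp : HasDerivAt (fun y : ℝ => ((s : ℂ) * y - I) ^ (-(k + 1 : ℤ)))
        (((-(k + 1 : ℤ) : ℤ) : ℂ) * ((s : ℂ) * x - I) ^ (-(k + 1 : ℤ) - 1) * s) x :=
      by have h := houter.comp x hinner; exact h
    have hmul := hcomp.const_mul (((-1 : ℂ)) ^ k * (k.factorial : ℂ) * (s : ℂ) ^ k)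
    have him := Complex.imCLM.hasFDerivAt.comp_hasDerivAt x hmul
    have : deriv (fun x : ℝ => ((((-1 : ℂ)) ^ k * (k.factorial : ℂ) * (s : ℂ) ^ k) *
          ((s : ℂ) * x - I) ^ (-(k + 1 : ℤ))).im) x
        = ((((-1 : ℂ)) ^ k * (k.factorial : ℂ) * (s : ℂ) ^ k) *
            (((-(k + 1 : ℤ) : ℤ) : ℂ) * ((s : ℂ) * x - I) ^ (-(k + 1 : ℤ) - 1) * s)).im := by
      exact him.deriv
    rw [this]
    congr 1
    push_cast
    have : (-(k + 1 : ℤ) - 1 : ℤ) = -(k + 2 : ℤ) := by ring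
    rw [this]
    have : (-((k:ℤ) + 1 + 1) : ℤ) = -((k:ℤ) + 2) := by ring
    rw [this]
    rw [Nat.factorial_succ]
    push_cast
    ring

lemma bound_aux (s : ℝ) (hs : 0 ≤ s) (k : ℕ) (x : ℝ) :
    |iteratedDeriv k (fun y : ℝ => (1 + s ^ 2 * y ^ 2)⁻¹) x| ≤ k.factorial * s ^ k := by
  rw [key]
  refine le_trans (Complex.abs_im_le_norm _) ?_
  have hw : 1 ≤ ‖(s : ℂ) * x - I‖ := by
    have := Complex.abs_im_le_norm ((s : ℂ) * x - I)
    simpa using this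
  calc ‖(((-1 : ℂ)) ^ k * (k.factorial : ℂ) * (s : ℂ) ^ k) *
          ((s : ℂ) * x - I) ^ (-(k + 1 : ℤ))‖
      = (k.factorial * s ^ k) * ‖(s : ℂ) * x - I‖ ^ (-(k + 1 : ℤ)) := by
        rw [norm_mul, norm_zpow, norm_mul, norm_mul, norm_pow, norm_pow]
        simp [_root_.abs_of_nonneg hs]
    _ ≤ (k.factorial * s ^ k) * 1 :=
        mul_le_mul_of_nonneg_left (zpow_le_one_of_nonpos₀ hw (by omega)) (by positivity)
    _ = k.factorial * s ^ k := by ring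

lemma eval0_aux (s : ℝ) (n : ℕ) :
    iteratedDeriv (2 * n) (fun y : ℝ => (1 + s ^ 2 * y ^ 2)⁻¹) 0
      = (-1 : ℝ) ^ n * (2 * n).factorial * s ^ (2 * n) := by
  simp only [key]
  have h0 : ((s : ℂ) * ((0 : ℝ) : ℂ) - I) = -I := by simp
  rw [h0]
  have h1 : (-I : ℂ) ^ (-((2 * n : ℕ) + 1 : ℤ)) = (-1) ^ n * I := by
    have e : ((2 * n : ℕ) + 1 : ℤ) = ((2 * n + 1 : ℕ) : ℤ) := by push_cast; ring
    rw [zpow_neg, e, zpow_natCast, pow_succ, pow_mul]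
    have : ((-I : ℂ)) ^ 2 = -1 := by
      rw [neg_pow, Complex.I_sq]; norm_num
    rw [this, mul_inv, inv_neg, Complex.inv_I, ← inv_pow, inv_neg, inv_one]
    ring
  rw [h1]
  have h2 : ((-1 : ℂ)) ^ (2 * n) = 1 := by
    rw [pow_mul]; norm_num
  rw [h2]
  have h3 : (1 * ((2 * n).factorial : ℂ) * (s : ℂ) ^ (2 * n)) * ((-1) ^ n * I)
      = ((((-1 : ℝ)) ^ n * (2 * n).factorial * s ^ (2 * n) : ℝ) : ℂ) * I := by
    push_cast; ring
  rw [h3]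
  rw [Complex.mul_I_im, Complex.ofReal_re]

lemma fun_rw (a : ℝ) (ha : 0 ≤ a) :
    (fun y : ℝ => (1 + a * y ^ 2)⁻¹) = (fun y : ℝ => (1 + (Real.sqrt a) ^ 2 * y ^ 2)⁻¹) := by
  funext y
  rw [Real.sq_sqrt ha]

lemma sqrt_pow_eq_rpow (a : ℝ) (ha : 0 ≤ a) (k : ℕ) :
    (Real.sqrt a) ^ k = a ^ ((k : ℝ) / 2) := by
  rw [Real.sqrt_eq_rpow, ← Real.rpow_natCast (a ^ (1/2 : ℝ)) k, ← Real.rpow_mul ha]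
  norm_num
  ring_nf

/-- for the symbol net `p_ε(x,ξ) = 1 + c_ε x²` (`c_ε ≥ 0`
moderate) the unique Colombeau solution `u_ε(x) = (1 + c_ε x²)⁻¹` of
`p u = 1` is `G^∞` — i.e. there is a uniform moderateness exponent `N`
valid for all derivatives on every compact set — if and only if `(c_ε)_ε`
is a slow scale net: `c_ε^p = O(ε⁻¹)` for every `p ≥ 0`. -/
theorem gInfty_iff_slowScale (c : ℝ → ℝ) (hc : ∀ ε : ℝ, 0 ≤ c ε)
    (hmod : ∃ N : ℕ, ∃ C > 0, ∀ ε : ℝ, 0 < ε → ε ≤ 1 → c ε ≤ C * ε ^ (-(N : ℝ))) :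
    (∃ N : ℕ, ∀ k : ℕ, ∀ K : Set ℝ, IsCompact K → ∃ C > 0,
        ∀ ε : ℝ, 0 < ε → ε ≤ 1 → ∀ x ∈ K,
          |iteratedDeriv k (fun y => (1 + c ε * y ^ 2)⁻¹) x| ≤ C * ε ^ (-(N : ℝ))) ↔
    (∀ p : ℝ, 0 ≤ p → ∃ cp > 0, ∀ ε : ℝ, 0 < ε → ε ≤ 1 → c ε ^ p ≤ cp * ε⁻¹) := by
  constructor
  · rintro ⟨N, hN⟩ p hp
    set M : ℕ := N + 1 with hM
    have hM0 : (0 : ℝ) < M := by positivity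
    -- Step 1 : moderateness of all powers with uniform exponent M
    have step1 : ∀ n : ℕ, ∃ C > 0, ∀ ε : ℝ, 0 < ε → ε ≤ 1 →
        c ε ^ n ≤ C * ε ^ (-(M : ℝ)) := by
      intro n
      obtain ⟨C, hC, h⟩ := hN (2 * n) {0} isCompact_singleton
      refine ⟨C, hC, fun ε hε hε1 => ?_⟩
      have h0 := h ε hε hε1 0 rfl
      rw [fun_rw (c ε) (hc ε), eval0_aux] at h0
      have hs2 : (Real.sqrt (c ε)) ^ (2 * n) = c ε ^ n := by
        rw [pow_mul, Real.sq_sqrt (hc ε)]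
      rw [hs2] at h0
      have habs : |(-1 : ℝ) ^ n * (2 * n).factorial * c ε ^ n|
          = (2 * n).factorial * c ε ^ n := by
        rw [abs_mul, abs_mul, _root_.abs_pow, abs_neg, abs_one, one_pow, one_mul,
          Nat.abs_cast, _root_.abs_of_nonneg (pow_nonneg (hc ε) n)]
      rw [habs] at h0
      have h1 : c ε ^ n ≤ (2 * n).factorial * c ε ^ n := by
        have : (1 : ℝ) ≤ (2 * n).factorial := by
          exact_mod_cast Nat.one_le_iff_ne_zero.mpr (Nat.factorial_ne_zero _)
        nlinarith [pow_nonneg (hc ε) n]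
      have h2 : ε ^ (-(N : ℝ)) ≤ ε ^ (-(M : ℝ)) := by
        apply Real.rpow_le_rpow_of_exponent_ge hε hε1
        simp [hM]
      calc c ε ^ n ≤ (2 * n).factorial * c ε ^ n := h1
        _ ≤ C * ε ^ (-(N : ℝ)) := h0
        _ ≤ C * ε ^ (-(M : ℝ)) := by nlinarith [Real.rpow_pos_of_pos hε (-(N:ℝ))]
    -- Step 2
    obtain ⟨C, hC, hCh⟩ := step1 ⌈p * M⌉₊
    refine ⟨max (C ^ ((1 : ℝ) / M)) 1, lt_of_lt_of_le one_pos (le_max_right _ _), ?_⟩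
    intro ε hε hε1
    have hεinv : (1 : ℝ) ≤ ε⁻¹ := (one_le_inv₀ hε).mpr hε1
    by_cases h1 : c ε ≤ 1
    · have : c ε ^ p ≤ 1 := Real.rpow_le_one (hc ε) h1 hp
      calc c ε ^ p ≤ 1 := this
        _ ≤ max (C ^ ((1 : ℝ) / M)) 1 * ε⁻¹ := by
            nlinarith [le_max_right (C ^ ((1 : ℝ) / M)) (1:ℝ)]
    · push_neg at h1
      have h1' : (1 : ℝ) ≤ c ε := le_of_lt h1
      have hn := hCh ε hε hε1
      set n : ℕ := ⌈p * M⌉₊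
      have hpn : p ≤ (n : ℝ) / M := by
        rw [le_div_iff₀ hM0]
        exact Nat.le_ceil _
      have e1 : c ε ^ p ≤ c ε ^ ((n : ℝ) / M) :=
        Real.rpow_le_rpow_of_exponent_le h1' hpn
      have e2 : c ε ^ ((n : ℝ) / M) = (c ε ^ (n : ℝ)) ^ ((1 : ℝ) / M) := by
        rw [← Real.rpow_mul (hc ε)]
        ring_nf
      have e3 : (c ε ^ (n : ℝ)) ^ ((1 : ℝ) / M) ≤ (C * ε ^ (-(M : ℝ))) ^ ((1 : ℝ) / M) := by
        apply Real.rpow_le_rpow (Real.rpow_nonneg (hc ε) _) _ (by positivity)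
        rw [Real.rpow_natCast]
        exact hn
      have e4 : (C * ε ^ (-(M : ℝ))) ^ ((1 : ℝ) / M)
          = C ^ ((1 : ℝ) / M) * ε⁻¹ := by
        rw [Real.mul_rpow (le_of_lt hC) (Real.rpow_nonneg (le_of_lt hε) _),
          ← Real.rpow_mul (le_of_lt hε)]
        congr 1
        rw [show (-(M : ℝ)) * (1 / M) = -1 by field_simp, Real.rpow_neg_one]
      calc c ε ^ p ≤ (C * ε ^ (-(M : ℝ))) ^ ((1 : ℝ) / M) := by
            rw [← e2] at e3; exact le_trans e1 e3
        _ = C ^ ((1 : ℝ) / M) * ε⁻¹ := e4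
        _ ≤ max (C ^ ((1 : ℝ) / M)) 1 * ε⁻¹ := by
            have := le_max_left (C ^ ((1 : ℝ) / M)) (1:ℝ)
            nlinarith
  · intro hss
    refine ⟨1, fun k K _ => ?_⟩
    obtain ⟨cp, hcp, h⟩ := hss ((k : ℝ) / 2) (by positivity)
    refine ⟨k.factorial * cp, by positivity, ?_⟩
    intro ε hε hε1 x hx
    rw [fun_rw (c ε) (hc ε)]
    calc |iteratedDeriv k (fun y : ℝ => (1 + (Real.sqrt (c ε)) ^ 2 * y ^ 2)⁻¹) x|
        ≤ k.factorial * (Real.sqrt (c ε)) ^ k := bound_aux _ (Real.sqrt_nonneg _) k x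
      _ = k.factorial * c ε ^ ((k : ℝ) / 2) := by
          rw [sqrt_pow_eq_rpow (c ε) (hc ε) k]
      _ ≤ k.factorial * (cp * ε⁻¹) := by
          have := h ε hε hε1
          have hkf : (0:ℝ) < k.factorial := by positivity
          nlinarith
      _ = (k.factorial * cp) * ε ^ (-((1:ℕ) : ℝ)) := by
          rw [show (-((1:ℕ) : ℝ)) = (-1 : ℝ) by norm_num, Real.rpow_neg_one]
          ring
end
end
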